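/- Let p_m < p_s and 0 < k < p_s − p_m be real numbers, and set h* := √(k/(p_s−p_m)) and μ₃* := k / (p_s − p_m + 2k − 2√(k(p_s−p_m))). Then h* ∈ (k/(p_s−p_m), 1), the denominator p_s − p_m + 2k − 2√(k(p_s−p_m)) is strictly positive, and for every h with k/(p_s−p_m) < h < 1 the value μ₂*(h) := h k / (h k + (1−h)(h(p_s−p_m) − k)) satisfies μ₂*(h) ≥ μ₃*, with equality if and only if h = h*. (This is the minimization of μ₂* over h used in the proof of Proposition 2.) -/

import Mathlib

/-- Minimization of `μ₂*` over `h` (used in the proof of Proposition 2):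
with `h* = √(k/(p_s−p_m))` and
`μ₃* = k/(p_s−p_m+2k−2√(k(p_s−p_m)))`, we have `h* ∈ (k/(p_s−p_m), 1)`, the
denominator of `μ₃*` is positive, and for all `h ∈ (k/(p_s−p_m), 1)` the value
`μ₂*(h)` is at least `μ₃*`, with equality iff `h = h*`. -/
theorem mu2_minimized_at_hstar
    (pm ps k : ℝ) (hpm : 0 < pm) (hps : pm < ps) (hk : 0 < k)
    (hkp : k < ps - pm) :
    (k / (ps - pm) < Real.sqrt (k / (ps - pm)) ∧
      Real.sqrt (k / (ps - pm)) < 1) ∧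
    0 < ps - pm + 2 * k - 2 * Real.sqrt (k * (ps - pm)) ∧
    ∀ h : ℝ, k / (ps - pm) < h → h < 1 →
      (k / (ps - pm + 2 * k - 2 * Real.sqrt (k * (ps - pm))) ≤
        h * k / (h * k + (1 - h) * (h * (ps - pm) - k)) ∧
      (h * k / (h * k + (1 - h) * (h * (ps - pm) - k)) =
          k / (ps - pm + 2 * k - 2 * Real.sqrt (k * (ps - pm))) ↔
        h = Real.sqrt (k / (ps - pm)))) := by
  set d : ℝ := ps - pm with hd_def
  have hd : 0 < d := by rw [hd_def]; linarith
  set t : ℝ := k / d with ht_def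
  have ht0 : 0 < t := div_pos hk hd
  have ht1 : t < 1 := (div_lt_one hd).mpr hkp
  set s : ℝ := Real.sqrt t with hs_def
  have hs0 : 0 < s := Real.sqrt_pos.mpr ht0
  have hs2 : s ^ 2 = t := Real.sq_sqrt ht0.le
  have hs1 : s < 1 := by
    nlinarith [hs2, hs0]
  have hts : t < s := by nlinarith [hs2, hs0, hs1]
  have hkd : k = t * d := by rw [ht_def, div_mul_cancel₀ k hd.ne']
  have hsqrtkd : Real.sqrt (k * d) = s * d := by
    have : k * d = t * d ^ 2 := by rw [hkd]; ring
    rw [this, Real.sqrt_mul ht0.le, Real.sqrt_sq hd.le]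
  have hD : 0 < d + 2 * k - 2 * Real.sqrt (k * d) := by
    rw [hsqrtkd]
    nlinarith [hs2, hs0, hs1, sq_nonneg (1 - s)]
  refine ⟨⟨hts, hs1⟩, hD, ?_⟩
  intro h h1 h2
  have hh0 : 0 < h := lt_trans ht0 h1
  have hden : 0 < h * k + (1 - h) * (h * d - k) := by
    have : 0 < h * d - k := by rw [hkd]; nlinarith
    nlinarith [mul_pos hh0 hk]
  have hks : k = s ^ 2 * d := by rw [hs2]; exact hkd
  -- key identity : h * D - den = d * (h - s)^2
  have key : h * (d + 2 * k - 2 * Real.sqrt (k * d)) -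
      (h * k + (1 - h) * (h * d - k)) = d * (h - s) ^ 2 := by
    rw [hsqrtkd]; linear_combination hks
  constructor
  · rw [div_le_div_iff₀ hD hden]
    nlinarith [key, mul_nonneg hk.le (mul_nonneg hd.le (sq_nonneg (h - s)))]
  · rw [div_eq_div_iff hden.ne' hD.ne']
    constructor
    · intro heq
      have hzero : k * (d * (h - s) ^ 2) = 0 := by linear_combination heq - k * key
      have hsq : (h - s) ^ 2 = 0 := by
        rcases mul_eq_zero.mp hzero with h0 | h0
        · exact absurd h0 hk.ne'
        · rcases mul_eq_zero.mp h0 with h0 | h0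
          · exact absurd h0 hd.ne'
          · exact h0
      have := pow_eq_zero_iff (n := 2) (by norm_num) |>.mp hsq
      linarith [this]
    · intro heq
      subst heq
      linear_combination k * key
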